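/- Let m ≥ 1, let 2 ≤ s ≤ m and j ≥ 1. Then E_j ≤ Σ_{i=1}^{s−1} λ_i γ_i² + 4 C_s^{2j} · Σ_{i=s}^m λ_i γ_i². (Key intermediate inequality in the proof of Theorem 2: testing the CG optimality property with the residual polynomial of the CG process whose initial error has no components along the first s−1 eigenvectors.) -/

import Mathlib

open Polynomial

noncomputable def cheb : ℕ → Polynomial ℝ
  | 0 => 1
  | 1 => X
  | (n+2) => 2 * X * cheb (n+1) - cheb n

lemma cheb_natDegree_le : ∀ n : ℕ, (cheb n).natDegree ≤ n := by
  intro n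
  induction n using Nat.twoStepInduction with
  | zero => simp [cheb]
  | one => simp [cheb]
  | more n ih1 ih2 =>
    rw [cheb]
    refine (natDegree_sub_le _ _).trans (max_le ?_ (by omega))
    refine (natDegree_mul_le).trans ?_
    have h2 : ((2 : ℝ[X]) * X).natDegree ≤ 1 :=
      natDegree_mul_le.trans (by simp)
    omega

lemma cheb_eval_cosh (t : ℝ) : ∀ n : ℕ, (cheb n).eval (Real.cosh t) = Real.cosh (n * t) := by
  intro n
  induction n using Nat.twoStepInduction with
  | zero => simp [cheb]
  | one => simp [cheb]
  | more n ih1 ih2 =>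
    rw [cheb]
    push_cast
    simp only [eval_sub, eval_mul, eval_ofNat, eval_X, ih1, ih2]
    push_cast
    rw [show ((n:ℝ)+2)*t = (((n:ℝ)+1)*t) + t by ring, Real.cosh_add,
      show (n:ℝ)*t = (((n:ℝ)+1)*t) - t by ring, Real.cosh_sub]
    ring

lemma cheb_eval_cos (t : ℝ) : ∀ n : ℕ, (cheb n).eval (Real.cos t) = Real.cos (n * t) := by
  intro n
  induction n using Nat.twoStepInduction with
  | zero => simp [cheb]
  | one => simp [cheb]
  | more n ih1 ih2 =>
    rw [cheb]
    push_cast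
    simp only [eval_sub, eval_mul, eval_ofNat, eval_X, ih1, ih2]
    push_cast
    rw [show ((n:ℝ)+2)*t = (((n:ℝ)+1)*t) + t by ring, Real.cos_add,
      show (n:ℝ)*t = (((n:ℝ)+1)*t) - t by ring, Real.cos_sub]
    ring

lemma cosh_log_eq {x : ℝ} (hx : 1 ≤ x) :
    Real.cosh (Real.log (x + Real.sqrt (x^2 - 1))) = x := by
  have hs : Real.sqrt (x^2-1) ^ 2 = x^2 - 1 := Real.sq_sqrt (by nlinarith)
  have hs0 : 0 ≤ Real.sqrt (x^2-1) := Real.sqrt_nonneg _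
  have hy : 0 < x + Real.sqrt (x^2-1) := by linarith
  rw [Real.cosh_eq, Real.exp_log hy, Real.exp_neg, Real.exp_log hy]
  have hinv : (x + Real.sqrt (x^2-1))⁻¹ = x - Real.sqrt (x^2-1) :=
    inv_eq_of_mul_eq_one_right (by nlinarith)
  rw [hinv]; ring

set_option maxHeartbeats 1000000 in
lemma exists_good_poly (a b : ℝ) (ha : 0 < a) (hab : a ≤ b) (j : ℕ) (hj : 1 ≤ j) :
    ∃ q : Polynomial ℝ, q.natDegree ≤ j ∧ q.eval 0 = 1 ∧
      (∀ x, 0 ≤ x → x ≤ a → (q.eval x)^2 ≤ 1) ∧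
      (∀ x, a ≤ x → x ≤ b →
        (q.eval x)^2 ≤ 4 * ((Real.sqrt (b/a) - 1)/(Real.sqrt (b/a) + 1))^(2*j)) := by
  rcases eq_or_lt_of_le hab with heq | hlt
  · -- degenerate case a = b
    refine ⟨1 - C a⁻¹ * X, ?_, by simp, ?_, ?_⟩
    · refine (natDegree_sub_le _ _).trans (max_le (by simp) ?_)
      exact le_trans ((natDegree_C_mul_le _ _).trans natDegree_X_le) hj
    · intro x hx0 hxa
      have h1 : 0 ≤ a⁻¹ * x := mul_nonneg (inv_nonneg.2 ha.le) hx0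
      have h2 : a⁻¹ * x ≤ a⁻¹ * a := mul_le_mul_of_nonneg_left hxa (inv_nonneg.2 ha.le)
      rw [inv_mul_cancel₀ ha.ne'] at h2
      simp only [eval_sub, eval_one, eval_mul, eval_C, eval_X]
      nlinarith
    · intro x hax hxb
      have hxa : x = a := le_antisymm (heq ▸ hxb) hax
      have hR : (0:ℝ) ≤ 4 * ((Real.sqrt (b/a) - 1)/(Real.sqrt (b/a) + 1))^(2*j) :=
        mul_nonneg (by norm_num) ((even_two_mul j).pow_nonneg _)
      simp only [eval_sub, eval_one, eval_mul, eval_C, eval_X, hxa,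
        inv_mul_cancel₀ ha.ne', sub_self]
      simpa using hR
  · -- main case a < b
    have hba : (0:ℝ) < b - a := by linarith
    set r := Real.sqrt (b/a) with hr_def
    have hr2 : r^2 = b/a := Real.sq_sqrt (div_nonneg (by linarith) ha.le)
    have hr0 : 0 ≤ r := Real.sqrt_nonneg _
    have hdiv1 : (1:ℝ) < b/a := (one_lt_div ha).2 hlt
    have hr1 : 1 < r := by nlinarith
    set Cst := (r-1)/(r+1) with hCst_def
    have hC0 : 0 < Cst := div_pos (by linarith) (by linarith)
    set x0 := (a+b)/(b-a) with hx0_def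
    have hx01 : 1 < x0 := by rw [lt_div_iff₀ hba]; linarith
    -- square root facts
    have hsa : Real.sqrt a ^ 2 = a := Real.sq_sqrt ha.le
    have hsb : Real.sqrt b ^ 2 = b := Real.sq_sqrt (by linarith)
    have hsa0 : 0 < Real.sqrt a := Real.sqrt_pos.2 ha
    have hsb0 : 0 < Real.sqrt b := Real.sqrt_pos.2 (by linarith)
    have hsab : Real.sqrt a < Real.sqrt b := Real.sqrt_lt_sqrt ha.le hlt
    have hr_eq : r = Real.sqrt b / Real.sqrt a := by
      rw [hr_def, Real.sqrt_div (by linarith : (0:ℝ) ≤ b)]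
    have h1 : Real.sqrt (x0^2 - 1) = 2*Real.sqrt a*Real.sqrt b/(b-a) := by
      rw [show x0^2 - 1 = (2*Real.sqrt a*Real.sqrt b/(b-a))^2 from by
        rw [hx0_def]; field_simp; linear_combination (-4*Real.sqrt b^2)*hsa + (-4*a)*hsb]
      exact Real.sqrt_sq (by positivity)
    have hkey : x0 + Real.sqrt (x0^2 - 1) = (r+1)/(r-1) := by
      have hne : Real.sqrt b / Real.sqrt a - 1 ≠ 0 := by
        have : 1 < Real.sqrt b / Real.sqrt a := (one_lt_div hsa0).2 hsab
        linarith
      have hRHS : (Real.sqrt b/Real.sqrt a+1)/(Real.sqrt b/Real.sqrt a-1)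
          = (Real.sqrt b+Real.sqrt a)/(Real.sqrt b-Real.sqrt a) := by
        rw [div_eq_div_iff hne (sub_pos.2 hsab).ne']
        field_simp
        try ring
      rw [h1, hx0_def, hr_eq, hRHS, ← add_div,
        div_eq_div_iff hba.ne' (sub_pos.2 hsab).ne']
      linear_combination (-2*Real.sqrt b)*hsa + (2*Real.sqrt a)*hsb
    set t0 := Real.log (x0 + Real.sqrt (x0^2-1)) with ht0_def
    have hcosh0 : Real.cosh t0 = x0 := cosh_log_eq hx01.le
    have hy0 : (0:ℝ) < x0 + Real.sqrt (x0^2-1) := by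
      have := Real.sqrt_nonneg (x0^2-1); linarith
    set tv := (cheb j).eval x0 with htv_def
    have htv : tv = Real.cosh (j * t0) := by rw [htv_def, ← hcosh0, cheb_eval_cosh]
    have htv1 : (1:ℝ) ≤ tv := htv ▸ Real.one_le_cosh _
    have htv0 : (0:ℝ) < tv := lt_of_lt_of_le one_pos htv1
    have hCj : (0:ℝ) < Cst^j := pow_pos hC0 j
    have htvC : tv⁻¹ ≤ 2 * Cst^j := by
      have hexp : Real.exp ((j:ℝ)*t0) = ((r+1)/(r-1))^j := by
        rw [Real.exp_nat_mul, ht0_def, Real.exp_log hy0, hkey]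
      have hCinv : ((r+1)/(r-1)) = Cst⁻¹ := by rw [hCst_def, inv_div]
      have htvlb : (Cst^j)⁻¹ / 2 ≤ tv := by
        rw [htv, Real.cosh_eq]
        have hp := Real.exp_pos (-((j:ℝ)*t0))
        have : (Cst^j)⁻¹ = Real.exp ((j:ℝ)*t0) := by
          rw [hexp, hCinv, inv_pow]
        rw [this]
        linarith [hp]
      have h2 : (Cst^j)⁻¹ ≤ 2 * tv := by linarith
      have h3 : Cst^j * (Cst^j)⁻¹ ≤ Cst^j * (2*tv) := mul_le_mul_of_nonneg_left h2 hCj.le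
      rw [mul_inv_cancel₀ hCj.ne'] at h3
      have h4 : (1:ℝ) ≤ 2*Cst^j*tv := by
        calc (1:ℝ) ≤ Cst^j * (2*tv) := h3
          _ = 2*Cst^j*tv := by ring
      calc tv⁻¹ = 1/tv := (one_div tv).symm
        _ ≤ 2*Cst^j := (div_le_iff₀ htv0).2 h4
    -- the polynomial
    refine ⟨C tv⁻¹ * ((cheb j).comp (C x0 - C (2/(b-a)) * X)), ?_, ?_, ?_, ?_⟩
    · refine (natDegree_C_mul_le _ _).trans (natDegree_comp_le.trans ?_)
      have hlin : (C x0 - C (2/(b-a)) * X).natDegree ≤ 1 :=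
        (natDegree_sub_le _ _).trans
          (max_le (by simp) ((natDegree_C_mul_le _ _).trans natDegree_X_le))
      calc (cheb j).natDegree * (C x0 - C (2/(b-a)) * X).natDegree
          ≤ j * 1 := Nat.mul_le_mul (cheb_natDegree_le j) hlin
        _ = j := by omega
    · simp only [eval_mul, eval_C, eval_comp, eval_sub, eval_X, mul_zero, sub_zero]
      rw [← htv_def, inv_mul_cancel₀ htv0.ne']
    · intro x hx0' hxa
      simp only [eval_mul, eval_C, eval_comp, eval_sub, eval_X]
      set u := x0 - 2/(b-a)*x with hu_def
      have hurep : u = (a+b-2*x)/(b-a) := by rw [hu_def, hx0_def]; field_simp; try ring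
      have hu1 : 1 ≤ u := by rw [hurep, le_div_iff₀ hba]; linarith
      have hux0 : u ≤ x0 := by
        rw [hurep, hx0_def]
        gcongr <;> linarith
      set t := Real.log (u + Real.sqrt (u^2-1)) with ht_def
      have hcoshu : Real.cosh t = u := cosh_log_eq hu1
      have hevalu : (cheb j).eval u = Real.cosh (j * t) := by
        rw [← hcoshu, cheb_eval_cosh]
      have ht00 : 0 ≤ t0 := Real.log_nonneg (by linarith [Real.sqrt_nonneg (x0^2-1)])
      have htnn : 0 ≤ t := Real.log_nonneg (by linarith [Real.sqrt_nonneg (u^2-1)])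
      have htle : t ≤ t0 := by
        apply Real.log_le_log (by linarith [Real.sqrt_nonneg (u^2-1)])
        have : u^2 - 1 ≤ x0^2 - 1 := by nlinarith
        have := Real.sqrt_le_sqrt this
        linarith
      have hE1 : (cheb j).eval u ≤ tv := by
        rw [hevalu, htv]
        apply Real.cosh_le_cosh.2
        rw [abs_of_nonneg (by positivity), abs_of_nonneg (by positivity)]
        exact mul_le_mul_of_nonneg_left htle (Nat.cast_nonneg j)
      have hE0 : 0 ≤ (cheb j).eval u := by rw [hevalu]; positivity
      have hle1 : tv⁻¹ * (cheb j).eval u ≤ 1 := by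
        have := mul_le_mul_of_nonneg_left hE1 (inv_nonneg.2 htv0.le)
        rwa [inv_mul_cancel₀ htv0.ne'] at this
      have hge0 : 0 ≤ tv⁻¹ * (cheb j).eval u := mul_nonneg (inv_nonneg.2 htv0.le) hE0
      have := pow_le_pow_left₀ hge0 hle1 2
      simpa using this
    · intro x hax hxb
      simp only [eval_mul, eval_C, eval_comp, eval_sub, eval_X]
      set u := x0 - 2/(b-a)*x with hu_def
      have hurep : u = (a+b-2*x)/(b-a) := by rw [hu_def, hx0_def]; field_simp; try ring
      have hu1 : u ≤ 1 := by rw [hurep, div_le_one hba]; linarith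
      have hun1 : -1 ≤ u := by rw [hurep, le_div_iff₀ hba]; linarith
      have hevalu : (cheb j).eval u = Real.cos (j * Real.arccos u) := by
        conv_lhs => rw [← Real.cos_arccos hun1 hu1]
        rw [cheb_eval_cos]
      have hE2 : ((cheb j).eval u)^2 ≤ 1 := by
        rw [hevalu]
        calc (Real.cos ((j:ℝ) * Real.arccos u))^2
            = |Real.cos ((j:ℝ) * Real.arccos u)|^2 := (sq_abs _).symm
          _ ≤ 1^2 := pow_le_pow_left₀ (abs_nonneg _) (Real.abs_cos_le_one _) 2
          _ = 1 := one_pow 2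
      have hpow : (2*Cst^j)^2 = 4 * Cst^(2*j) := by
        rw [mul_pow, ← pow_mul, mul_comm j 2]; norm_num
      have hinv0 : 0 ≤ tv⁻¹ := inv_nonneg.2 htv0.le
      calc (tv⁻¹ * (cheb j).eval u)^2 = tv⁻¹^2 * ((cheb j).eval u)^2 := by ring
        _ ≤ tv⁻¹^2 * 1 := mul_le_mul_of_nonneg_left hE2 (by positivity)
        _ = tv⁻¹^2 := mul_one _
        _ ≤ (2*Cst^j)^2 := pow_le_pow_left₀ hinv0 htvC 2
        _ = 4 * Cst^(2*j) := hpow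


/-- Key intermediate inequality in the proof of Theorem 2 of the paper:
`E_j ≤ Σ_{i=1}^{s-1} λ_i γ_i² + 4 C_s^{2j} Σ_{i=s}^m λ_i γ_i²`, where
`E j = sInf { Σ_{i=1}^m λ_i (γ_i q(λ_i))² : q polynomial, deg q ≤ j, q(0) = 1 }` and
`C_s = (√κ_s − 1)/(√κ_s + 1)` with `κ_s = λ_m / λ_s`. -/
theorem cg_intermediate_bound (m : ℕ) (hm : 1 ≤ m) (s : ℕ) (hs : 2 ≤ s) (hsm : s ≤ m)
    (lam gam : ℕ → ℝ)
    (hpos : ∀ i, 1 ≤ i → i ≤ m → 0 < lam i)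
    (hmono : ∀ i k, 1 ≤ i → i ≤ k → k ≤ m → lam i ≤ lam k)
    (j : ℕ) (hj : 1 ≤ j) :
    sInf {y : ℝ | ∃ q : Polynomial ℝ, q.natDegree ≤ j ∧ q.eval 0 = 1 ∧
        y = ∑ i ∈ Finset.Icc 1 m, lam i * (gam i * q.eval (lam i)) ^ 2} ≤
      (∑ i ∈ Finset.Icc 1 (s - 1), lam i * gam i ^ 2) +
        4 * ((Real.sqrt (lam m / lam s) - 1) / (Real.sqrt (lam m / lam s) + 1)) ^ (2 * j) *
          ∑ i ∈ Finset.Icc s m, lam i * gam i ^ 2 := by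
  have ha : 0 < lam s := hpos s (by omega) hsm
  have hab : lam s ≤ lam m := hmono s m (by omega) hsm le_rfl
  obtain ⟨q, hdeg, hq0, hq1, hq2⟩ := exists_good_poly (lam s) (lam m) ha hab j hj
  have hbdd : BddBelow {y : ℝ | ∃ q : Polynomial ℝ, q.natDegree ≤ j ∧ q.eval 0 = 1 ∧
      y = ∑ i ∈ Finset.Icc 1 m, lam i * (gam i * q.eval (lam i)) ^ 2} := by
    refine ⟨0, fun y hy => ?_⟩
    obtain ⟨q', -, -, rfl⟩ := hy
    exact Finset.sum_nonneg fun i hi =>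
      mul_nonneg (hpos i (Finset.mem_Icc.1 hi).1 (Finset.mem_Icc.1 hi).2).le (sq_nonneg _)
  have hmem : (∑ i ∈ Finset.Icc 1 m, lam i * (gam i * q.eval (lam i)) ^ 2) ∈
      {y : ℝ | ∃ q : Polynomial ℝ, q.natDegree ≤ j ∧ q.eval 0 = 1 ∧
        y = ∑ i ∈ Finset.Icc 1 m, lam i * (gam i * q.eval (lam i)) ^ 2} :=
    ⟨q, hdeg, hq0, rfl⟩
  refine le_trans (csInf_le hbdd hmem) ?_
  have hsplit : ∑ i ∈ Finset.Icc 1 m, lam i * (gam i * q.eval (lam i)) ^ 2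
      = (∑ i ∈ Finset.Icc 1 (s-1), lam i * (gam i * q.eval (lam i)) ^ 2)
        + ∑ i ∈ Finset.Icc s m, lam i * (gam i * q.eval (lam i)) ^ 2 := by
    rw [show Finset.Icc 1 m = Finset.Ioc 0 m from by rw [← Finset.Icc_add_one_left_eq_Ioc, Nat.zero_add],
        show Finset.Icc 1 (s-1) = Finset.Ioc 0 (s-1) from by rw [← Finset.Icc_add_one_left_eq_Ioc, Nat.zero_add],
        show Finset.Icc s m = Finset.Ioc (s-1) m from by
          rw [← Finset.Icc_add_one_left_eq_Ioc]; congr 1; omega]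
    exact (Finset.sum_Ioc_consecutive _ (Nat.zero_le _) (by omega)).symm
  rw [hsplit]
  have hle1 : ∑ i ∈ Finset.Icc 1 (s-1), lam i * (gam i * q.eval (lam i)) ^ 2
      ≤ ∑ i ∈ Finset.Icc 1 (s-1), lam i * gam i ^ 2 := by
    refine Finset.sum_le_sum fun i hi => ?_
    obtain ⟨hi1, hi2⟩ := Finset.mem_Icc.1 hi
    have hip : 0 < lam i := hpos i hi1 (by omega)
    have hia : lam i ≤ lam s := hmono i s hi1 (by omega) hsm
    have hq := hq1 (lam i) hip.le hia
    have hnn : 0 ≤ lam i * gam i ^ 2 := mul_nonneg hip.le (sq_nonneg _)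
    calc lam i * (gam i * q.eval (lam i)) ^ 2
        = (lam i * gam i ^ 2) * (q.eval (lam i)) ^ 2 := by ring
      _ ≤ (lam i * gam i ^ 2) * 1 := mul_le_mul_of_nonneg_left hq hnn
      _ = lam i * gam i ^ 2 := mul_one _
  have hle2 : ∑ i ∈ Finset.Icc s m, lam i * (gam i * q.eval (lam i)) ^ 2
      ≤ 4 * ((Real.sqrt (lam m / lam s) - 1) / (Real.sqrt (lam m / lam s) + 1)) ^ (2 * j) *
          ∑ i ∈ Finset.Icc s m, lam i * gam i ^ 2 := by
    rw [Finset.mul_sum]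
    refine Finset.sum_le_sum fun i hi => ?_
    obtain ⟨hi1, hi2⟩ := Finset.mem_Icc.1 hi
    have hip : 0 < lam i := hpos i (by omega) hi2
    have hsi : lam s ≤ lam i := hmono s i (by omega) hi1 hi2
    have him : lam i ≤ lam m := hmono i m (by omega) hi2 le_rfl
    have hq := hq2 (lam i) hsi him
    have hnn : 0 ≤ lam i * gam i ^ 2 := mul_nonneg hip.le (sq_nonneg _)
    calc lam i * (gam i * q.eval (lam i)) ^ 2
        = (lam i * gam i ^ 2) * (q.eval (lam i)) ^ 2 := by ring
      _ ≤ (lam i * gam i ^ 2) *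
          (4 * ((Real.sqrt (lam m / lam s) - 1) / (Real.sqrt (lam m / lam s) + 1)) ^ (2 * j)) :=
        mul_le_mul_of_nonneg_left hq hnn
      _ = 4 * ((Real.sqrt (lam m / lam s) - 1) / (Real.sqrt (lam m / lam s) + 1)) ^ (2 * j) *
          (lam i * gam i ^ 2) := by ring
  exact add_le_add hle1 hle2
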